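/- arXiv:2204.00905 — 5 statements merged into one kernel-verified Lean document; each statement's English description precedes it below -/
import Mathlib

section
/- Let R be a finite commutative ring with maximal ideals m_1, …, m_u, and for each j let s_j be the stationary index of m_j (the least k with m_j^k = m_j^(k+1)). Then the ideals m_j^(s_j) are pairwise coprime, their intersection is zero, and the map a ↦ (a + m_1^(s_1), …, a + m_u^(s_u)) is a ring isomorphism R ≅ R/m_1^(s_1) × ⋯ × R/m_u^(s_u). -/
/-- The stationary index of an ideal: the least `k` with `I^k = I^(k+1)`. -/
noncomputable def stationaryIndex {R : Type*} [CommRing R] (I : Ideal R) : ℕ :=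
  sInf {k : ℕ | I ^ k = I ^ (k + 1)}

section Aux

variable {R : Type*} [CommRing R]

lemma aux_finite_ideal [Finite R] : Finite (Ideal R) :=
  Finite.of_injective (fun I : Ideal R => (I : Set R)) SetLike.coe_injective

lemma aux_stationary_mem [Finite R] (I : Ideal R) :
    I ^ stationaryIndex I = I ^ (stationaryIndex I + 1) := by
  have : Finite (Ideal R) := aux_finite_ideal
  have hne : {k : ℕ | I ^ k = I ^ (k + 1)}.Nonempty := by
    obtain ⟨x, y, hxy, h⟩ := Finite.exists_ne_map_eq_of_infinite (fun k : ℕ => I ^ k)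
    rcases Ne.lt_or_gt hxy with hlt | hlt
    · exact ⟨x, le_antisymm (h ▸ Ideal.pow_le_pow_right hlt) (Ideal.pow_le_pow_right (Nat.le_succ x))⟩
    · exact ⟨y, le_antisymm (h.symm ▸ Ideal.pow_le_pow_right hlt) (Ideal.pow_le_pow_right (Nat.le_succ y))⟩
  exact Nat.sInf_mem hne

lemma aux_pow_eventually_eq [Finite R] (I : Ideal R) {n : ℕ}
    (hn : stationaryIndex I ≤ n) : I ^ n = I ^ stationaryIndex I := by
  induction n with
  | zero => simp_all
  | succ n ih =>
    rcases Nat.lt_or_ge (stationaryIndex I) (n + 1) with h | h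
    · have hn' : stationaryIndex I ≤ n := Nat.lt_succ_iff.mp h
      rw [pow_succ, ih hn', ← pow_succ, ← aux_stationary_mem]
    · have : stationaryIndex I = n + 1 := le_antisymm hn h
      rw [this]

lemma aux_prod_eq_inf {ι : Type*} (s : Finset ι) (f : ι → Ideal R)
    (h : (s : Set ι).Pairwise (Function.onFun IsCoprime f)) :
    ∏ i ∈ s, f i = s.inf f := by
  classical
  induction s using Finset.induction with
  | empty => simp
  | @insert a s ha ih =>
    have hs : (s : Set ι).Pairwise (Function.onFun IsCoprime f) :=
      h.mono (by simp [Finset.coe_insert, Set.subset_insert])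
    have hcop : IsCoprime (f a) (∏ i ∈ s, f i) := by
      apply IsCoprime.prod_right
      intro i hi
      exact h (by simp) (by simp [hi]) (fun hai => ha (hai ▸ hi))
    rw [Finset.prod_insert ha, Finset.inf_insert, ← ih hs,
      ← Ideal.inf_eq_mul_of_isCoprime hcop]

end Aux

theorem crt_decomposition_finite_ring
    (R : Type*) [CommRing R] [Fintype R] :
    (∀ I J : Ideal R, I.IsMaximal → J.IsMaximal → I ≠ J →
      I ^ stationaryIndex I ⊔ J ^ stationaryIndex J = ⊤) ∧
    (⨅ I : {I : Ideal R // I.IsMaximal}, (I : Ideal R) ^ stationaryIndex (I : Ideal R) = ⊥) ∧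
    Function.Bijective
      (Pi.ringHom (fun I : {I : Ideal R // I.IsMaximal} =>
        Ideal.Quotient.mk ((I : Ideal R) ^ stationaryIndex (I : Ideal R)))) := by
  have hIdeal : Finite (Ideal R) := aux_finite_ideal
  have hFin : Finite {I : Ideal R // I.IsMaximal} := Subtype.finite
  -- coprimality
  have hcop : ∀ I J : Ideal R, I.IsMaximal → J.IsMaximal → I ≠ J →
      I ^ stationaryIndex I ⊔ J ^ stationaryIndex J = ⊤ := by
    intro I J hI hJ hne
    have hsup : I ⊔ J = ⊤ := Ideal.IsMaximal.coprime_of_ne hI hJ hne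
    have : IsCoprime I J := (Ideal.isCoprime_iff_sup_eq).mpr hsup
    exact (Ideal.isCoprime_iff_sup_eq).mp (this.pow)
  have hinf : (⨅ I : {I : Ideal R // I.IsMaximal},
      (I : Ideal R) ^ stationaryIndex (I : Ideal R)) = ⊥ := by
    classical
    have : IsArtinianRing R := inferInstance
    obtain ⟨n, hn⟩ := IsArtinianRing.isNilpotent_jacobson_bot (R := R)
    haveI : Fintype {I : Ideal R // I.IsMaximal} := Fintype.ofFinite _
    set N : ℕ := max n (Finset.univ.sup
      (fun I : {I : Ideal R // I.IsMaximal} => stationaryIndex (I : Ideal R))) with hN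
    have hNs : ∀ I : {I : Ideal R // I.IsMaximal},
        stationaryIndex (I : Ideal R) ≤ N := fun I =>
      le_trans (Finset.le_sup (f := fun I : {I : Ideal R // I.IsMaximal} => stationaryIndex (I : Ideal R)) (Finset.mem_univ I)) (le_max_right n _)
    have h1 : (⨅ I : {I : Ideal R // I.IsMaximal},
        (I : Ideal R) ^ stationaryIndex (I : Ideal R)) =
        ⨅ I : {I : Ideal R // I.IsMaximal}, (I : Ideal R) ^ N :=
      iInf_congr fun I => (aux_pow_eventually_eq _ (hNs I)).symm
    rw [h1]
    have hpair : ((Finset.univ : Finset {I : Ideal R // I.IsMaximal}) : Set {I : Ideal R // I.IsMaximal}).Pairwise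
        (Function.onFun IsCoprime fun I : {I : Ideal R // I.IsMaximal} => (I : Ideal R) ^ N) := by
      intro I _ J _ hne
      have hsup : (I : Ideal R) ⊔ (J : Ideal R) = ⊤ :=
        Ideal.IsMaximal.coprime_of_ne I.2 J.2 (fun h => hne (Subtype.ext h))
      exact ((Ideal.isCoprime_iff_sup_eq).mpr hsup).pow
    have h2 : (⨅ I : {I : Ideal R // I.IsMaximal}, (I : Ideal R) ^ N) =
        ∏ I : {I : Ideal R // I.IsMaximal}, (I : Ideal R) ^ N := by
      rw [aux_prod_eq_inf _ _ hpair, Finset.inf_univ_eq_iInf]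
    rw [h2, Finset.prod_pow]
    have h3 : (∏ I : {I : Ideal R // I.IsMaximal}, (I : Ideal R)) ≤
        Ideal.jacobson (⊥ : Ideal R) := by
      rw [Ideal.jacobson]
      refine le_sInf ?_
      rintro J ⟨-, hJ⟩
      exact le_trans Ideal.prod_le_inf
        (Finset.inf_le (Finset.mem_univ (⟨J, hJ⟩ : {I : Ideal R // I.IsMaximal})))
    refine le_bot_iff.mp ?_
    calc (∏ I : {I : Ideal R // I.IsMaximal}, (I : Ideal R)) ^ N
        ≤ (Ideal.jacobson (⊥ : Ideal R)) ^ N := Ideal.pow_right_mono h3 N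
      _ ≤ (Ideal.jacobson (⊥ : Ideal R)) ^ n := Ideal.pow_le_pow_right (le_max_left _ _)
      _ = ⊥ := hn
  refine ⟨hcop, hinf, ?_, ?_⟩
  · -- injective
    rw [RingHom.injective_iff_ker_eq_bot, Pi.ringHom, Ideal.ker_Pi_Quotient_mk]
    exact hinf
  · -- surjective
    have hpair : Pairwise (Function.onFun IsCoprime fun I : {I : Ideal R // I.IsMaximal} =>
        (I : Ideal R) ^ stationaryIndex (I : Ideal R)) := by
      intro I J hne
      exact Ideal.isCoprime_iff_sup_eq.mpr
        (hcop _ _ I.2 J.2 (fun h => hne (Subtype.ext h)))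
    have hs := Ideal.quotientInfToPiQuotient_surj hpair
    intro y
    obtain ⟨x, hx⟩ := hs y
    obtain ⟨a, rfl⟩ := Ideal.Quotient.mk_surjective x
    exact ⟨a, by rw [← hx]; ext i; simp [Ideal.quotientInfToPiQuotient_mk', Pi.ringHom]⟩
end

section
/- In the ring R = F_2[u_1,…,u_k]/(u_1²,…,u_k²), the annihilator (equivalently, the dual with respect to the bilinear form [x,y] = xy) of the ideal generated by u_{i_1},…,u_{i_s} is the principal ideal generated by the product u_{i_1}u_{i_2}⋯u_{i_s}, and this ideal has cardinality 2^(2^(k−s)). -/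
/-- The ring `F₂[u₁,…,u_k]/(u₁²,…,u_k²)`. -/
def Rk (k : ℕ) : Type :=
  MvPolynomial (Fin k) (ZMod 2) ⧸
    Ideal.span {f : MvPolynomial (Fin k) (ZMod 2) | ∃ i, f = MvPolynomial.X i ^ 2}

noncomputable instance (k : ℕ) : CommRing (Rk k) := Ideal.Quotient.commRing _

/-- The class of the variable `uᵢ` in `Rk k`. -/
noncomputable def uvar (k : ℕ) (i : Fin k) : Rk k :=
  Ideal.Quotient.mk _ (MvPolynomial.X i)


namespace AnnAux

open MvPolynomial

variable (k : ℕ)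

abbrev P (k : ℕ) := MvPolynomial (Fin k) (ZMod 2)

noncomputable def J (k : ℕ) : Ideal (P k) := Ideal.span {f : P k | ∃ i, f = X i ^ 2}

noncomputable instance : Algebra (ZMod 2) (Rk k) := Ideal.Quotient.algebra _

noncomputable example : Module (ZMod 2) (Rk k) := inferInstance
noncomputable example : IsScalarTower (ZMod 2) (Rk k) (Rk k) := inferInstance

noncomputable def mkh : P k →+* Rk k := Ideal.Quotient.mk (J k)

/-- exponent vector of the squarefree monomial with support `S` -/
noncomputable def expS (S : Finset (Fin k)) : Fin k →₀ ℕ := ∑ i ∈ S, Finsupp.single i 1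

lemma expS_apply (S : Finset (Fin k)) (j : Fin k) :
    expS k S j = if j ∈ S then 1 else 0 := by
  classical
  simp [expS, Finsupp.finset_sum_apply, Finsupp.single_apply,
    Finset.sum_ite_eq' S j (fun _ => 1)]

lemma expS_injective : Function.Injective (expS k) := by
  intro S S' h
  ext j
  have := congrArg (fun f => f j) h
  simp only [expS_apply] at this
  by_cases hj : j ∈ S <;> by_cases hj' : j ∈ S' <;> simp_all

lemma prod_X_eq (S : Finset (Fin k)) :
    (∏ i ∈ S, (X i : P k)) = monomial (expS k S) 1 := by
  classical
  induction S using Finset.induction with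
  | empty => simp [expS]
  | @insert a s hx ih =>
    rw [Finset.prod_insert hx, ih]
    rw [show expS k (insert a s) = Finsupp.single a 1 + expS k s by
      simp [expS, Finset.sum_insert hx]]
    rw [X, monomial_mul, one_mul]


noncomputable def psi : P k →ₗ[ZMod 2] (Finset (Fin k) → ZMod 2) where
  toFun p := fun S => coeff (expS k S) p
  map_add' p q := by funext S; simp [coeff_add]
  map_smul' c p := by funext S; simp [coeff_smul]

lemma eq_expS_of_le_one (d : Fin k →₀ ℕ) (h : ∀ j, d j ≤ 1) :
    d = expS k d.support := by
  ext j
  rw [expS_apply]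
  by_cases hj : j ∈ d.support
  · have := Finsupp.mem_support_iff.mp hj
    have := h j
    simp only [hj, if_true]; omega
  · have := Finsupp.notMem_support_iff.mp hj
    simp [hj, this]

noncomputable def K : Ideal (P k) where
  carrier := {p | ∀ S, coeff (expS k S) p = 0}
  zero_mem' := by intro S; simp
  add_mem' := by intro a b ha hb S; simp [coeff_add, ha S, hb S]
  smul_mem' := by
    intro r p hp S
    rw [smul_eq_mul, coeff_mul]
    apply Finset.sum_eq_zero
    rintro ⟨a, b⟩ hab
    rw [Finset.HasAntidiagonal.mem_antidiagonal] at hab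
    have hb1 : ∀ j, b j ≤ 1 := by
      intro j
      have : a j + b j = expS k S j := by rw [← hab]; rfl
      rw [expS_apply] at this
      split at this <;> omega
    have : coeff b p = 0 := by
      rw [eq_expS_of_le_one k b hb1]; exact hp _
    simp [this]

lemma J_le_K : J k ≤ K k := by
  rw [J, Ideal.span_le]
  rintro f ⟨i, rfl⟩ S
  have hx : (X i ^ 2 : P k) = monomial (Finsupp.single i 2) 1 := by
    rw [X_pow_eq_monomial]
  rw [show (X i ^ 2 : P k) = monomial (Finsupp.single i 2) 1 from hx,
    coeff_monomial, if_neg]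
  intro h
  have := congrArg (fun f => f i) h
  simp only [Finsupp.single_apply, if_pos rfl, expS_apply] at this
  split at this <;> split at this <;> simp_all

noncomputable def psibar : Rk k →ₗ[ZMod 2] (Finset (Fin k) → ZMod 2) :=
  (Submodule.liftQ ((J k).restrictScalars (ZMod 2)) (psi k) (by
    intro x hx
    rw [LinearMap.mem_ker]
    funext S
    exact J_le_K k hx S)).comp
    (Submodule.Quotient.restrictScalarsEquiv (ZMod 2) (J k)).symm.toLinearMap

lemma psibar_mk (p : P k) :
    psibar k (Ideal.Quotient.mk (J k) p) = fun S => coeff (expS k S) p := by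
  rfl

noncomputable def sf (S : Finset (Fin k)) : Rk k := ∏ i ∈ S, uvar k i

lemma sf_eq_mk (S : Finset (Fin k)) :
    sf k S = Ideal.Quotient.mk (J k) (monomial (expS k S) 1) := by
  rw [sf, ← prod_X_eq, map_prod]
  rfl

lemma psibar_sf (S : Finset (Fin k)) :
    psibar k (sf k S) = fun S' => if S = S' then 1 else 0 := by
  rw [sf_eq_mk, psibar_mk]
  funext S'
  rw [coeff_monomial]
  by_cases h : S = S'
  · subst h; simp
  · rw [if_neg (fun hh => h (expS_injective k hh)), if_neg h]

noncomputable def sigma : (Finset (Fin k) → ZMod 2) →ₗ[ZMod 2] Rk k where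
  toFun f := ∑ S : Finset (Fin k), f S • sf k S
  map_add' f g := by simp [add_smul, Finset.sum_add_distrib]
  map_smul' c f := by simp [mul_smul, Finset.smul_sum]

lemma psibar_sigma (f : Finset (Fin k) → ZMod 2) : psibar k (sigma k f) = f := by
  funext S'
  rw [sigma]
  simp only [LinearMap.coe_mk, AddHom.coe_mk, map_sum, map_smul]
  rw [Finset.sum_apply]
  simp only [psibar_sf, Pi.smul_apply, smul_eq_mul]
  rw [Finset.sum_congr rfl (fun S _ => by rw [mul_ite, mul_one, mul_zero])]
  rw [Finset.sum_ite_eq' Finset.univ S' f]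
  simp

lemma mk_monomial_mem_range (d : Fin k →₀ ℕ) :
    Ideal.Quotient.mk (J k) (monomial d 1) ∈ LinearMap.range (sigma k) := by
  by_cases h : ∀ j, d j ≤ 1
  · refine ⟨fun S => if S = d.support then 1 else 0, ?_⟩
    show ∑ S : Finset (Fin k), _ = _
    rw [Finset.sum_congr rfl (fun S _ => by rw [ite_smul, one_smul, zero_smul])]
    rw [Finset.sum_ite_eq' Finset.univ d.support (sf k)]
    rw [if_pos (Finset.mem_univ _), sf_eq_mk, ← eq_expS_of_le_one k d h]
  · push_neg at h
    obtain ⟨i, hi⟩ := h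
    have hle : Finsupp.single i 2 + (d - Finsupp.single i 2) = d := by
      ext j
      simp only [Finsupp.add_apply, Finsupp.tsub_apply, Finsupp.single_apply]
      by_cases hj : i = j
      · subst hj; simp; omega
      · simp [hj]
    have : (monomial d 1 : P k) =
        X i ^ 2 * monomial (d - Finsupp.single i 2) 1 := by
      rw [X_pow_eq_monomial, monomial_mul, one_mul, hle]
    rw [this, map_mul, show Ideal.Quotient.mk (J k) (X i ^ 2) = 0 from
      Ideal.Quotient.eq_zero_iff_mem.mpr (Ideal.subset_span ⟨i, rfl⟩), zero_mul]
    exact ⟨0, by simp; rfl⟩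

lemma sigma_surjective : Function.Surjective (sigma k) := by
  intro x
  obtain ⟨p, rfl⟩ := Ideal.Quotient.mk_surjective x
  suffices h : Ideal.Quotient.mk (J k) p ∈ LinearMap.range (sigma k) by
    obtain ⟨f, hf⟩ := h; exact ⟨f, hf⟩
  rw [show p = ∑ d ∈ p.support, monomial d (coeff d p) from
    (support_sum_monomial_coeff p).symm]
  rw [map_sum]
  apply Submodule.sum_mem
  intro d _
  have : (monomial d (coeff d p) : P k) = coeff d p • monomial d 1 := by
    rw [smul_monomial, smul_eq_mul, mul_one]
  rw [this, show Ideal.Quotient.mk (J k) (coeff d p • (monomial d 1 : P k)) =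
      coeff d p • Ideal.Quotient.mk (J k) (monomial d 1) by
    rw [← Ideal.Quotient.mkₐ_eq_mk (ZMod 2)]
    exact map_smul (Ideal.Quotient.mkₐ (ZMod 2) (J k)) _ _]
  exact Submodule.smul_mem _ _ (mk_monomial_mem_range k d)

lemma sigma_psibar (x : Rk k) : sigma k (psibar k x) = x := by
  obtain ⟨f, rfl⟩ := sigma_surjective k x
  rw [psibar_sigma]

lemma repr_eq (x : Rk k) : x = ∑ S : Finset (Fin k), psibar k x S • sf k S := by
  conv_lhs => rw [← sigma_psibar k x]
  rfl

lemma uvar_eq (i : Fin k) : uvar k i = Ideal.Quotient.mk (J k) (X i) := rfl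

lemma uvar_sq (i : Fin k) : uvar k i * uvar k i = 0 := by
  show (Ideal.Quotient.mk (J k) (X i) * Ideal.Quotient.mk (J k) (X i) : P k ⧸ J k) = 0
  rw [← sq, ← map_pow (Ideal.Quotient.mk (J k)) (X i) 2,
    Ideal.Quotient.eq_zero_iff_mem]
  exact Ideal.subset_span ⟨i, rfl⟩

lemma union_singleton' (S : Finset (Fin k)) (i : Fin k) : S ∪ {i} = insert i S := by
  ext x; simp [or_comm]

lemma sf_mul (S S' : Finset (Fin k)) :
    sf k S * sf k S' = if Disjoint S S' then sf k (S ∪ S') else 0 := by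
  by_cases h : Disjoint S S'
  · rw [if_pos h, sf, sf, sf, ← Finset.prod_union h]
  · rw [if_neg h]
    rw [Finset.not_disjoint_iff] at h
    obtain ⟨j, hjS, hjS'⟩ := h
    rw [sf, sf, ← Finset.mul_prod_erase _ _ hjS, ← Finset.mul_prod_erase _ _ hjS',
      mul_mul_mul_comm, uvar_sq, zero_mul]

lemma mem_span_sf_iff (T : Finset (Fin k)) (x : Rk k) :
    x ∈ Ideal.span {sf k T} ↔ ∀ S, ¬ T ⊆ S → psibar k x S = 0 := by
  constructor
  · rintro hx S0 hS0
    obtain ⟨r, rfl⟩ := Ideal.mem_span_singleton'.mp hx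
    rw [← sigma_psibar k r]
    set c := psibar k r with hc
    show psibar k ((∑ S : Finset (Fin k), c S • sf k S) * sf k T) S0 = 0
    erw [Finset.sum_mul]
    simp only [smul_mul_assoc, map_sum, map_smul]
    rw [Finset.sum_apply]
    apply Finset.sum_eq_zero
    intro S _
    rw [sf_mul]
    by_cases hd : Disjoint S T
    · rw [if_pos hd, psibar_sf]
      have : ¬ (S ∪ T = S0) := fun hh => hS0 (hh ▸ Finset.subset_union_right)
      simp [this]
    · rw [if_neg hd]; simp
  · intro h
    rw [repr_eq k x]
    apply Submodule.sum_mem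
    intro S _
    by_cases hTS : T ⊆ S
    · apply Submodule.smul_of_tower_mem
      apply Ideal.mem_span_singleton'.mpr
      exact ⟨sf k (S \ T), by
        rw [sf_mul, if_pos Finset.sdiff_disjoint, Finset.sdiff_union_of_subset hTS]⟩
    · rw [h S hTS, zero_smul]; exact Submodule.zero_mem _

lemma coeff_mul_uvar (x : Rk k) (i : Fin k) (S0 : Finset (Fin k)) (hi : i ∉ S0) :
    psibar k (x * uvar k i) (insert i S0) = psibar k x S0 := by
  have hu : uvar k i = sf k {i} := by rw [sf, Finset.prod_singleton]
  conv_lhs => rw [← sigma_psibar k x]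
  set c := psibar k x with hc
  show psibar k ((∑ S : Finset (Fin k), c S • sf k S) * uvar k i) (insert i S0) = c S0
  rw [hu]
  erw [Finset.sum_mul]
  simp only [smul_mul_assoc, map_sum, map_smul]
  rw [Finset.sum_apply]
  rw [Finset.sum_eq_single S0]
  · rw [sf_mul, if_pos (Finset.disjoint_singleton_right.mpr hi), union_singleton' k S0 i,
      psibar_sf]
    simp
  · intro S _ hS
    rw [sf_mul]
    by_cases hd : Disjoint S {i}
    · rw [if_pos hd, psibar_sf]
      have hiS : i ∉ S := Finset.disjoint_singleton_right.mp hd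
      have : ¬ (S ∪ {i} = insert i S0) := by
        intro hh
        rw [union_singleton' k S i] at hh
        apply hS
        have := congrArg (fun s => Finset.erase s i) hh
        simpa [Finset.erase_insert hiS, Finset.erase_insert hi] using this
      rw [union_singleton' k S i] at this
      simp [this]
    · rw [if_neg hd]; simp
  · intro h; exact absurd (Finset.mem_univ S0) h

lemma ann_eq (T : Finset (Fin k)) :
    (Ideal.span ((uvar k) '' (T : Set (Fin k)))).annihilator = Ideal.span {sf k T} := by
  ext x
  rw [show Ideal.span ((uvar k) '' (T : Set (Fin k))) =
      Submodule.span (Rk k) ((uvar k) '' (T : Set (Fin k))) from rfl,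
    Submodule.mem_annihilator_span, mem_span_sf_iff]
  constructor
  · rintro hx S0 hS0
    obtain ⟨i, hiT, hiS0⟩ := Finset.not_subset.mp hS0
    have h0 : x * uvar k i = 0 := by
      have := hx ⟨uvar k i, ⟨i, Finset.mem_coe.mpr hiT, rfl⟩⟩
      simpa [smul_eq_mul] using this
    have := coeff_mul_uvar k x i S0 hiS0
    rw [h0] at this
    rw [← this]
    simp
  · intro h
    rintro ⟨n, ⟨i, hiT, rfl⟩⟩
    show x • uvar k i = 0
    obtain ⟨r, rfl⟩ := Ideal.mem_span_singleton'.mp ((mem_span_sf_iff k T x).mpr h)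
    rw [smul_eq_mul, mul_assoc, show sf k T * uvar k i = 0 by
      rw [show uvar k i = sf k {i} by rw [sf, Finset.prod_singleton], sf_mul,
        if_neg (fun hd => (Finset.disjoint_singleton_right.mp hd) (Finset.mem_coe.mp hiT))],
      mul_zero]

lemma card_supersets (T : Finset (Fin k)) :
    Fintype.card {S : Finset (Fin k) // T ⊆ S} = 2 ^ (k - T.card) := by
  classical
  rw [Fintype.card_subtype]
  have himg : Finset.univ.filter (fun S => T ⊆ S) = Tᶜ.powerset.image (· ∪ T) := by
    ext S
    simp only [Finset.mem_filter, Finset.mem_univ, true_and, Finset.mem_image,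
      Finset.mem_powerset]
    constructor
    · intro h
      refine ⟨S \ T, ?_, Finset.sdiff_union_of_subset h⟩
      intro x hx
      rw [Finset.mem_sdiff] at hx
      exact Finset.mem_compl.mpr hx.2
    · rintro ⟨A, _, rfl⟩
      exact Finset.subset_union_right
  have hinj : Set.InjOn (· ∪ T) ↑(Tᶜ.powerset) := by
    intro A hA B hB hAB
    simp only [Finset.coe_powerset, Set.mem_preimage, Set.mem_powerset_iff,
      Finset.coe_subset] at hA hB
    have hA' : Disjoint A T :=
      Finset.disjoint_left.mpr fun x hx hxT => Finset.mem_compl.mp (hA hx) hxT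
    have hB' : Disjoint B T :=
      Finset.disjoint_left.mpr fun x hx hxT => Finset.mem_compl.mp (hB hx) hxT
    have hAB' : A ∪ T = B ∪ T := hAB
    have : (A ∪ T) \ T = (B ∪ T) \ T := by rw [hAB']
    rwa [Finset.union_sdiff_cancel_right hA', Finset.union_sdiff_cancel_right hB'] at this
  rw [himg, Finset.card_image_of_injOn hinj, Finset.card_powerset, Finset.card_compl,
    Fintype.card_fin]

noncomputable def V (T : Finset (Fin k)) :
    Submodule (ZMod 2) (Finset (Fin k) → ZMod 2) where
  carrier := {f | ∀ S, ¬ T ⊆ S → f S = 0}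
  zero_mem' := fun S _ => rfl
  add_mem' := by intro a b ha hb S h; simp only [Pi.add_apply, ha S h, hb S h, add_zero]
  smul_mem' := by intro c f hf S h; simp only [Pi.smul_apply, hf S h, smul_zero]

noncomputable def VEquiv (T : Finset (Fin k)) :
    ↥(V k T) ≃ ({S : Finset (Fin k) // T ⊆ S} → ZMod 2) where
  toFun f S := f.1 S.1
  invFun g := ⟨fun S => if h : T ⊆ S then g ⟨S, h⟩ else 0, fun S h => dif_neg h⟩
  left_inv f := by
    apply Subtype.ext
    funext S
    by_cases h : T ⊆ S
    · simp [h]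
    · simp [h, f.2 S h]
  right_inv g := by funext S; exact dif_pos S.2

noncomputable def rkEquiv : Rk k ≃ (Finset (Fin k) → ZMod 2) :=
  ⟨psibar k, sigma k, sigma_psibar k, psibar_sigma k⟩

lemma card_span (T : Finset (Fin k)) :
    Nat.card ↥(Ideal.span {sf k T}) = 2 ^ (2 ^ (k - T.card)) := by
  classical
  have e1 : ↥(Ideal.span {sf k T}) ≃ ↥(V k T) :=
    Equiv.subtypeEquiv (rkEquiv k) (fun x => by
      rw [mem_span_sf_iff]
      exact Iff.rfl)
  rw [Nat.card_congr e1, Nat.card_congr (VEquiv k T), Nat.card_eq_fintype_card,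
    Fintype.card_fun, card_supersets, ZMod.card 2]

end AnnAux

theorem annihilator_ideal_span_uvars (k : ℕ) (T : Finset (Fin k)) :
    (Ideal.span ((uvar k) '' (T : Set (Fin k)))).annihilator =
      Ideal.span {∏ i ∈ T, uvar k i} ∧
    Nat.card ↥(Ideal.span {∏ i ∈ T, uvar k i}) = 2 ^ (2 ^ (k - T.card)) := by
  refine ⟨AnnAux.ann_eq k T, AnnAux.card_span k T⟩
end

section
/- Let R be a finite commutative local Frobenius ring with residue field F_q, and let C_1, C_2 be linear codes of length n over R with generator matrices G_1, G_2 and parity-check matrices H_1, H_2 (generator matrices of the duals). Then dim(C_1 ∩ C_2) = dim(C_1) − Rank_q(H_2 G_1ᵀ). -/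
/-- The dual code of a linear code `C ⊆ Rⁿ` with respect to the standard inner product. -/
def dualCode {R : Type*} [CommRing R] {n : ℕ} (C : Submodule R (Fin n → R)) :
    Submodule R (Fin n → R) where
  carrier := {u | ∀ c ∈ C, ∑ i, u i * c i = 0}
  zero_mem' := by intro c hc; simp
  add_mem' := by
    intro a b ha hb c hc
    have := ha c hc
    have := hb c hc
    simp only [Pi.add_apply, add_mul, Finset.sum_add_distrib, *, add_zero]
  smul_mem' := by
    intro r a ha c hc
    have h := ha c hc
    simp only [Pi.smul_apply, smul_eq_mul, mul_assoc, ← Finset.mul_sum, h, mul_zero]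


/-- `Rank_q` of a matrix: `log_q` of the cardinality of its row span. -/
noncomputable def rankq {R : Type*} [CommRing R] {m k : ℕ} (q : ℕ)
    (M : Matrix (Fin m) (Fin k) R) : ℝ :=
  Real.logb q (Nat.card ↥(Submodule.span R (Set.range M)))


set_option linter.unusedSectionVars false
set_option linter.unusedVariables false

section FrobeniusAux

open IsLocalRing

universe u
variable {R : Type u} [CommRing R] [Fintype R] [IsLocalRing R]

/-- The maximal ideal of a finite local ring is nilpotent. -/
lemma max_nilpotent : ∃ t : ℕ, (maximalIdeal R) ^ t = ⊥ := by
  have h := IsArtinianRing.isNilpotent_jacobson_bot (R := R)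
  rw [jacobson_eq_maximalIdeal ⊥ bot_ne_top] at h
  exact h

lemma soc_ne_bot : (maximalIdeal R).annihilator ≠ ⊥ := by
  classical
  obtain ⟨t, ht⟩ := max_nilpotent (R := R)
  have h0 : ∃ t : ℕ, (maximalIdeal R) ^ t = ⊥ := ⟨t, ht⟩
  set t0 := Nat.find h0 with ht0
  have ht0spec : (maximalIdeal R) ^ t0 = ⊥ := Nat.find_spec h0
  have ht0ne : t0 ≠ 0 := by
    intro h
    rw [h, pow_zero, Ideal.one_eq_top] at ht0spec
    exact top_ne_bot ht0spec
  have hlt : (maximalIdeal R) ^ (t0 - 1) ≠ ⊥ := Nat.find_min h0 (Nat.sub_lt (Nat.pos_of_ne_zero ht0ne) one_pos)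
  obtain ⟨x, hx, hx0⟩ := Submodule.exists_mem_ne_zero_of_ne_bot hlt
  intro hbot
  apply hx0
  have : x ∈ (maximalIdeal R).annihilator := by
    rw [Submodule.mem_annihilator]
    intro m hm
    have : x * m ∈ (maximalIdeal R) ^ (t0 - 1) * maximalIdeal R := Ideal.mul_mem_mul hx hm
    rw [← pow_succ, Nat.sub_add_cancel (Nat.pos_of_ne_zero ht0ne), ht0spec] at this
    simpa [smul_eq_mul, mul_comm] using this
  rw [hbot] at this
  exact this

lemma ann_eq_max {x : R} (hx : x ∈ (maximalIdeal R).annihilator) (hx0 : x ≠ 0) :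
    LinearMap.ker (LinearMap.toSpanSingleton R R x) = maximalIdeal R := by
  rw [Submodule.mem_annihilator] at hx
  apply le_antisymm
  · apply le_maximalIdeal
    intro h
    have : (1 : R) ∈ LinearMap.ker (LinearMap.toSpanSingleton R R x) := by rw [h]; trivial
    simp only [LinearMap.mem_ker, LinearMap.toSpanSingleton_apply, one_smul] at this
    exact hx0 this
  · intro m hm
    simp only [LinearMap.mem_ker, LinearMap.toSpanSingleton_apply, smul_eq_mul]
    have := hx m hm
    simpa [smul_eq_mul, mul_comm] using this

lemma soc_le_range (hFrob : Module.Injective R R) {x : R}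
    (hx : x ∈ (maximalIdeal R).annihilator) (hx0 : x ≠ 0) :
    (maximalIdeal R).annihilator ≤ LinearMap.range (LinearMap.toSpanSingleton R R x) := by
  intro y hy
  rw [Submodule.mem_annihilator] at hy
  set L := LinearMap.toSpanSingleton R R x with hL
  have hker : LinearMap.ker L = maximalIdeal R := ann_eq_max hx hx0
  -- ψ : R ⧸ ker L →ₗ R sending r to r • y
  have hle : LinearMap.ker L ≤ LinearMap.ker (LinearMap.toSpanSingleton R R y) := by
    intro m hm
    rw [hker] at hm
    simp only [LinearMap.mem_ker, LinearMap.toSpanSingleton_apply, smul_eq_mul]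
    simpa [smul_eq_mul, mul_comm] using hy m hm
  set ψ : (R ⧸ LinearMap.ker L) →ₗ[R] R :=
    Submodule.liftQ (LinearMap.ker L) (LinearMap.toSpanSingleton R R y) hle with hψ
  set e := LinearMap.quotKerEquivRange L with he
  set g : (LinearMap.range L) →ₗ[R] R := ψ ∘ₗ (e.symm : LinearMap.range L →ₗ[R] R ⧸ LinearMap.ker L)
  obtain ⟨h, hh⟩ := hFrob.out (LinearMap.range L).subtype
    (Submodule.injective_subtype _) g
  have hxmem : x ∈ LinearMap.range L := ⟨1, by simp [hL]⟩
  have key : h x = y := by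
    have h2 : e.symm ⟨x, hxmem⟩ = Submodule.Quotient.mk 1 := by
      rw [← LinearEquiv.symm_apply_apply e (Submodule.Quotient.mk 1)]
      congr 1
      symm
      apply Subtype.ext
      rw [he, LinearMap.quotKerEquivRange_apply_mk]
      simp [hL]
    have := hh ⟨x, hxmem⟩
    simp only [Submodule.coe_subtype] at this
    rw [this]
    show ψ (e.symm ⟨x, hxmem⟩) = y
    rw [h2, hψ, Submodule.liftQ_apply]
    simp
  refine ⟨h 1, ?_⟩
  rw [hL, LinearMap.toSpanSingleton_apply, smul_eq_mul]
  have hx1 : h x = x * h 1 := by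
    conv_lhs => rw [show x = x • (1:R) by simp]
    rw [map_smul, smul_eq_mul]
  rw [mul_comm, ← hx1, key]

lemma soc_card (hFrob : Module.Injective R R) :
    Nat.card (maximalIdeal R).annihilator = Nat.card (R ⧸ maximalIdeal R) := by
  obtain ⟨x, hx, hx0⟩ := Submodule.exists_mem_ne_zero_of_ne_bot (soc_ne_bot (R := R))
  set L := LinearMap.toSpanSingleton R R x with hL
  have hrange : (maximalIdeal R).annihilator = LinearMap.range L := by
    apply le_antisymm (soc_le_range hFrob hx hx0)
    rw [← LinearMap.span_singleton_eq_range, Submodule.span_le]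
    simpa using hx
  rw [hrange, Nat.card_congr (LinearMap.quotKerEquivRange L).toEquiv.symm, ann_eq_max hx hx0]

/-- The Hom-equivalence for the residue field. -/
noncomputable def homResidueEquiv : ((R ⧸ maximalIdeal R) →ₗ[R] R) ≃ (maximalIdeal R).annihilator where
  toFun f := ⟨f (Submodule.Quotient.mk 1), by
    rw [Submodule.mem_annihilator]
    intro m hm
    rw [smul_eq_mul, mul_comm, ← smul_eq_mul, ← map_smul]
    have : m • (Submodule.Quotient.mk (1:R) : R ⧸ maximalIdeal R) = Submodule.Quotient.mk m := by
      rw [← Submodule.Quotient.mk_smul]; simp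
    rw [this, (Submodule.Quotient.mk_eq_zero _).2 hm, map_zero]⟩
  invFun y := Submodule.liftQ (maximalIdeal R) (LinearMap.toSpanSingleton R R (y : R)) (by
    intro m hm
    simp only [LinearMap.mem_ker, LinearMap.toSpanSingleton_apply, smul_eq_mul]
    have := Submodule.mem_annihilator.mp y.2 m hm
    simpa [smul_eq_mul, mul_comm] using this)
  left_inv f := by
    apply LinearMap.ext
    intro z
    obtain ⟨r, rfl⟩ := Submodule.Quotient.mk_surjective _ z
    rw [Submodule.liftQ_apply, LinearMap.toSpanSingleton_apply, ← map_smul]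
    congr 1
    rw [← Submodule.Quotient.mk_smul]; simp
  right_inv y := Subtype.ext (by
    show (Submodule.liftQ _ _ _) (Submodule.Quotient.mk 1) = (y : R)
    rw [Submodule.liftQ_apply, LinearMap.toSpanSingleton_apply, one_smul])

lemma homCardSimple (hFrob : Module.Injective R R) (M : Type u) [AddCommGroup M] [Module R M]
    [IsSimpleModule R M] : Nat.card (M →ₗ[R] R) = Nat.card M := by
  obtain ⟨I, hImax, ⟨eq⟩⟩ := (isSimpleModule_iff_quot_maximal (R := R) (M := M)).mp inferInstance
  have hI : I = maximalIdeal R := eq_maximalIdeal hImax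
  subst hI
  have h1 : Nat.card (M →ₗ[R] R) = Nat.card ((R ⧸ maximalIdeal R) →ₗ[R] R) :=
    Nat.card_congr (eq.arrowCongr (LinearEquiv.refl R R)).toEquiv
  rw [h1, Nat.card_congr (homResidueEquiv (R := R)), soc_card hFrob,
    Nat.card_congr eq.toEquiv]

instance homFinite (M : Type u) [AddCommGroup M] [Module R M] [Finite M] :
    Finite (M →ₗ[R] R) :=
  Finite.of_injective (fun f => (f : M → R)) DFunLike.coe_injective

instance submoduleFinite (M : Type u) [AddCommGroup M] [Module R M] [Finite M] :
    Finite (Submodule R M) :=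
  Finite.of_injective (fun N => (N : Set M)) SetLike.coe_injective

/-- Kernel of restriction to `N` is `Hom(M/N, R)`. -/
noncomputable def kerRestrictEquiv (M : Type u) [AddCommGroup M] [Module R M]
    (N : Submodule R M) :
    ((M ⧸ N) →ₗ[R] R) ≃ LinearMap.ker (LinearMap.lcomp R R N.subtype) where
  toFun h := ⟨h ∘ₗ N.mkQ, by
    apply LinearMap.ext
    intro x
    show h (Submodule.Quotient.mk (x : M)) = 0
    rw [(Submodule.Quotient.mk_eq_zero _).2 x.2, map_zero]⟩
  invFun f := Submodule.liftQ N f.1 (by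
    intro x hx
    have h0 : LinearMap.lcomp R R N.subtype f.1 = 0 := LinearMap.mem_ker.mp f.2
    have h1 := LinearMap.congr_fun h0 ⟨x, hx⟩
    rw [LinearMap.lcomp_apply, LinearMap.zero_apply] at h1
    exact LinearMap.mem_ker.mpr h1)
  left_inv h := by
    apply LinearMap.ext
    intro z
    obtain ⟨m, rfl⟩ := Submodule.Quotient.mk_surjective _ z
    simp
  right_inv f := by
    apply Subtype.ext
    apply LinearMap.ext
    intro m
    simp

lemma homCardAux (hFrob : Module.Injective R R) :
    ∀ (c : ℕ) (M : Type u) [AddCommGroup M] [Module R M] [Finite M], Nat.card M = c →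
      Nat.card (M →ₗ[R] R) = Nat.card M := by
  intro c
  induction c using Nat.strong_induction_on with
  | _ c IH =>
    intro M _ _ _ hc
    rcases subsingleton_or_nontrivial M with h | h
    · have h1 : Nat.card M = 1 := Nat.card_eq_one_iff_unique.2 ⟨h, inferInstance⟩
      have h2 : Nat.card (M →ₗ[R] R) = 1 := Nat.card_eq_one_iff_unique.2 ⟨inferInstance, inferInstance⟩
      rw [h1, h2]
    · -- find a coatom
      obtain ⟨N, hN, -⟩ := (eq_top_or_exists_le_coatom (⊥ : Submodule R M)).resolve_left bot_ne_top
      have hsimple : IsSimpleModule R (M ⧸ N) := isSimpleModule_iff_isCoatom.2 hN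
      set ρ := LinearMap.lcomp R R N.subtype with hρ
      have hsurj : Function.Surjective ρ := by
        intro g
        obtain ⟨h, hh⟩ := hFrob.out N.subtype (Submodule.injective_subtype N) g
        exact ⟨h, LinearMap.ext hh⟩
      -- card N < card M
      have hNlt : Nat.card ↥N < Nat.card M := by
        have hne : (N : Set M) ≠ Set.univ := by
          intro hN'
          exact hN.1 (by rwa [← SetLike.coe_set_eq, Submodule.top_coe])
        have : (N : Set M) ⊂ Set.univ := hne.lt_of_le (Set.subset_univ _)
        calc Nat.card ↥N = (N : Set M).ncard := Nat.card_coe_set_eq _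
        _ < (Set.univ : Set M).ncard := Set.ncard_lt_ncard this (Set.finite_univ)
        _ = Nat.card M := by rw [Set.ncard_univ]
      have hN' : Nat.card (↥N →ₗ[R] R) = Nat.card ↥N := IH _ (hc ▸ hNlt) ↥N rfl
      have hQ : Nat.card ((M ⧸ N) →ₗ[R] R) = Nat.card (M ⧸ N) := homCardSimple hFrob _
      have hquot : Nat.card ((M →ₗ[R] R) ⧸ LinearMap.ker ρ) = Nat.card (↥N →ₗ[R] R) := by
        rw [Nat.card_congr (LinearMap.quotKerEquivRange ρ).toEquiv,
          LinearMap.range_eq_top.2 hsurj]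
        exact Nat.card_congr (Submodule.topEquiv).toEquiv
      calc Nat.card (M →ₗ[R] R)
          = Nat.card (LinearMap.ker ρ) * Nat.card ((M →ₗ[R] R) ⧸ LinearMap.ker ρ) :=
            Submodule.card_eq_card_quotient_mul_card _
        _ = Nat.card ((M ⧸ N) →ₗ[R] R) * Nat.card (↥N →ₗ[R] R) := by
            rw [hquot, Nat.card_congr (kerRestrictEquiv M N).symm]
        _ = Nat.card (M ⧸ N) * Nat.card ↥N := by rw [hQ, hN']
        _ = Nat.card M := by rw [mul_comm, (Submodule.card_eq_card_quotient_mul_card N).symm]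

lemma homCard (hFrob : Module.Injective R R) (M : Type u) [AddCommGroup M] [Module R M]
    [Finite M] : Nat.card (M →ₗ[R] R) = Nat.card M :=
  homCardAux hFrob (Nat.card M) M rfl

section dual

variable {n : ℕ}

lemma mem_dualCode {C : Submodule R (Fin n → R)} {u : Fin n → R} :
    u ∈ dualCode C ↔ ∀ c ∈ C, ∑ i, u i * c i = 0 := Iff.rfl

/-- The dot product with `u` as a linear map. -/
def dotL (u : Fin n → R) : (Fin n → R) →ₗ[R] R where
  toFun v := ∑ i, u i * v i
  map_add' a b := by simp [mul_add, Finset.sum_add_distrib]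
  map_smul' r v := by simp [Finset.mul_sum, mul_left_comm]

lemma single_sum (v : Fin n → R) : ∑ i, v i • (Pi.single i (1 : R) : Fin n → R) = v := by
  funext j
  simp [Finset.sum_apply, Pi.single_apply, Finset.sum_ite_eq]

lemma dual_le_ker {C : Submodule R (Fin n → R)} (u : dualCode C) :
    C ≤ LinearMap.ker (dotL (u : Fin n → R)) :=
  fun c hc => LinearMap.mem_ker.mpr (u.2 c hc)

lemma apply_eq_sum (g : (Fin n → R) →ₗ[R] R) (v : Fin n → R) :
    ∑ i, g (Pi.single i 1) * v i = g v := by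
  conv_rhs => rw [← single_sum v]
  rw [map_sum]
  refine Finset.sum_congr rfl fun i _ => ?_
  rw [map_smul, smul_eq_mul, mul_comm]

/-- `Hom(V/C, R)` is equivalent to the dual code. -/
noncomputable def dualEquiv (C : Submodule R (Fin n → R)) :
    (((Fin n → R) ⧸ C) →ₗ[R] R) ≃ dualCode C where
  toFun h := ⟨fun i => (h ∘ₗ C.mkQ) (Pi.single i 1), by
    intro c hc
    rw [apply_eq_sum (h ∘ₗ C.mkQ) c]
    show h (C.mkQ c) = 0
    rw [Submodule.mkQ_apply, (Submodule.Quotient.mk_eq_zero _).2 hc, map_zero]⟩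
  invFun u := Submodule.liftQ C (dotL (u : Fin n → R)) (dual_le_ker u)
  left_inv h := by
    apply LinearMap.ext
    intro z
    obtain ⟨m, rfl⟩ := Submodule.Quotient.mk_surjective _ z
    rw [Submodule.liftQ_apply]
    show ∑ i, (h ∘ₗ C.mkQ) (Pi.single i 1) * m i = _
    rw [apply_eq_sum (h ∘ₗ C.mkQ) m]
    rfl
  right_inv u := by
    apply Subtype.ext
    funext i
    show (Submodule.liftQ C (dotL (u : Fin n → R)) (dual_le_ker u) ∘ₗ C.mkQ) (Pi.single i 1)
      = (u : Fin n → R) i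
    rw [Submodule.liftQ_mkQ]
    show ∑ j, (u : Fin n → R) j * (Pi.single i (1:R) : Fin n → R) j = _
    simp [Pi.single_apply, Finset.sum_ite_eq, mul_ite]

lemma cardDual (hFrob : Module.Injective R R) (C : Submodule R (Fin n → R)) :
    Nat.card (dualCode C) * Nat.card C = Nat.card (Fin n → R) := by
  rw [Nat.card_congr (dualEquiv C).symm, homCard hFrob ((Fin n → R) ⧸ C)]
  rw [Submodule.card_eq_card_quotient_mul_card C, mul_comm]

end dual

section main

variable {n : ℕ}

lemma mem_dualCode_span {S : Set (Fin n → R)} {u : Fin n → R} :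
    u ∈ dualCode (Submodule.span R S) ↔ ∀ s ∈ S, ∑ i, u i * s i = 0 := by
  constructor
  · intro h s hs
    exact h s (Submodule.subset_span hs)
  · intro h c hc
    have hle : Submodule.span R S ≤ LinearMap.ker (dotL u) := by
      rw [Submodule.span_le]
      intro s hs
      exact LinearMap.mem_ker.mpr (h s hs)
    exact hle hc

lemma dual_inf_sup (C₁ C₂ : Submodule R (Fin n → R)) :
    dualCode C₁ ⊓ dualCode C₂ = dualCode (C₁ ⊔ C₂) := by
  apply le_antisymm
  · rintro u ⟨h₁, h₂⟩ c hc
    obtain ⟨y, hy, z, hz, rfl⟩ := Submodule.mem_sup.mp hc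
    have := h₁ y hy
    have := h₂ z hz
    simp only [Pi.add_apply, mul_add, Finset.sum_add_distrib, *, add_zero]
  · intro u hu
    exact ⟨fun c hc => hu c (Submodule.mem_sup_left hc),
      fun c hc => hu c (Submodule.mem_sup_right hc)⟩

lemma card_ker_range {A B : Type u} [AddCommGroup A] [Module R A] [Finite A]
    [AddCommGroup B] [Module R B] (f : A →ₗ[R] B) :
    Nat.card A = Nat.card (LinearMap.ker f) * Nat.card (LinearMap.range f) := by
  rw [Submodule.card_eq_card_quotient_mul_card (LinearMap.ker f)]
  rw [Nat.card_congr (LinearMap.quotKerEquivRange f).toEquiv]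

lemma card_sup_inf (p p' : Submodule R (Fin n → R)) :
    Nat.card ↥(p ⊔ p') * Nat.card ↥(p ⊓ p') = Nat.card ↥p * Nat.card ↥p' := by
  have e := LinearMap.quotientInfEquivSupQuotient p p'
  have h1 : Nat.card ↥p =
      Nat.card ↥(p ⊓ p') * Nat.card (↥p ⧸ Submodule.comap p.subtype (p ⊓ p')) := by
    rw [Submodule.card_eq_card_quotient_mul_card (Submodule.comap p.subtype (p ⊓ p'))]
    rw [Nat.card_congr (Submodule.comapSubtypeEquivOfLe inf_le_left).toEquiv]
  have h2 : Nat.card ↥(p ⊔ p') =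
      Nat.card ↥p' * Nat.card (↥(p ⊔ p') ⧸ Submodule.comap (p ⊔ p').subtype p') := by
    rw [Submodule.card_eq_card_quotient_mul_card (Submodule.comap (p ⊔ p').subtype p')]
    rw [Nat.card_congr (Submodule.comapSubtypeEquivOfLe le_sup_right).toEquiv]
  rw [h1, h2, Submodule.comap_inf, Nat.card_congr e.toEquiv]
  ring

end main

end FrobeniusAux

theorem dim_inter_eq_dim_sub_rank
    (R : Type*) [CommRing R] [Fintype R] [IsLocalRing R]
    (hFrob : Module.Injective R R)
    (q n k₁ k₂ m₁ m₂ : ℕ) (hq : q = Nat.card (IsLocalRing.ResidueField R))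
    (C₁ C₂ : Submodule R (Fin n → R))
    (G₁ : Matrix (Fin k₁) (Fin n) R) (G₂ : Matrix (Fin k₂) (Fin n) R)
    (H₁ : Matrix (Fin m₁) (Fin n) R) (H₂ : Matrix (Fin m₂) (Fin n) R)
    (hG₁ : Submodule.span R (Set.range G₁) = C₁)
    (hG₂ : Submodule.span R (Set.range G₂) = C₂)
    (hH₁ : Submodule.span R (Set.range H₁) = dualCode C₁)
    (hH₂ : Submodule.span R (Set.range H₂) = dualCode C₂) :
    Real.logb q (Nat.card ↥(C₁ ⊓ C₂)) =
      Real.logb q (Nat.card C₁) - rankq q (H₂ * G₁.transpose) := by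
  classical
  haveI h₁ : Nonempty ↥(C₁ ⊓ C₂) := ⟨0⟩
  haveI h₂ : Nonempty ↥C₂ := ⟨0⟩
  haveI h₃ : Nonempty ↥(dualCode (C₁ ⊔ C₂)) := ⟨0⟩
  haveI h₄ : Nonempty ↥(Submodule.span R (Set.range (H₂ * G₁.transpose))) := ⟨0⟩
  set f' : ↥(dualCode C₂) →ₗ[R] (Fin k₁ → R) :=
    G₁.mulVecLin ∘ₗ (dualCode C₂).subtype with hf'
  have hker : LinearMap.ker G₁.mulVecLin = dualCode C₁ := by
    ext v
    rw [LinearMap.mem_ker, ← hG₁, mem_dualCode_span, Matrix.mulVecLin_apply, funext_iff]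
    constructor
    · intro h s hs
      obtain ⟨l, rfl⟩ := hs
      have := h l
      simpa [Matrix.mulVec, dotProduct, mul_comm] using this
    · intro h l
      have := h (G₁ l) ⟨l, rfl⟩
      simpa [Matrix.mulVec, dotProduct, mul_comm] using this
  have hkerf' : LinearMap.ker f' =
      Submodule.comap (dualCode C₂).subtype (dualCode C₁ ⊓ dualCode C₂) := by
    rw [hf', LinearMap.ker_comp, hker]
    ext x
    simp [Submodule.mem_comap, x.2]
  have hcardker : Nat.card (LinearMap.ker f') = Nat.card ↥(dualCode (C₁ ⊔ C₂)) := by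
    rw [hkerf', ← dual_inf_sup C₁ C₂]
    exact Nat.card_congr (Submodule.comapSubtypeEquivOfLe inf_le_right).toEquiv
  have hrange : LinearMap.range f' = Submodule.span R (Set.range (H₂ * G₁.transpose)) := by
    rw [hf', LinearMap.range_comp, Submodule.range_subtype, ← hH₂,
      Submodule.map_span, ← Set.range_comp (f := (H₂ : Fin m₂ → Fin n → R))]
    have hfun : (⇑G₁.mulVecLin ∘ H₂) = (H₂ * G₁.transpose : Matrix (Fin m₂) (Fin k₁) R) := by
      funext j l
      show G₁.mulVecLin (H₂ j) l = _
      simp [Matrix.mulVec, dotProduct, Matrix.mul_apply, mul_comm]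
    rw [hfun]
  have h1 : Nat.card ↥(dualCode C₂) =
      Nat.card (LinearMap.ker f') * Nat.card (LinearMap.range f') := card_ker_range f'
  have h2 := cardDual hFrob C₂
  have h3 := cardDual hFrob (C₁ ⊔ C₂)
  have hds_pos : 0 < Nat.card ↥(dualCode (C₁ ⊔ C₂)) := Nat.card_pos
  have hb_pos : 0 < Nat.card ↥C₂ := Nat.card_pos
  have hu_pos : 0 < Nat.card ↥(C₁ ⊓ C₂) := Nat.card_pos
  have hr_pos : 0 < Nat.card ↥(Submodule.span R (Set.range (H₂ * G₁.transpose))) := Nat.card_pos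
  have e1 : Nat.card (LinearMap.ker f') * Nat.card (LinearMap.range f') * Nat.card ↥C₂
      = Nat.card (Fin n → R) := by rw [← h1]; exact h2
  rw [hcardker, hrange, ← h3, mul_assoc] at e1
  have hrb : Nat.card ↥(Submodule.span R (Set.range (H₂ * G₁.transpose))) * Nat.card ↥C₂
      = Nat.card ↥(C₁ ⊔ C₂) := Nat.eq_of_mul_eq_mul_left hds_pos e1
  have h4 := card_sup_inf C₁ C₂
  have key : Nat.card ↥C₁ = Nat.card ↥(C₁ ⊓ C₂) *
      Nat.card ↥(Submodule.span R (Set.range (H₂ * G₁.transpose))) := by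
    apply Nat.eq_of_mul_eq_mul_right hb_pos
    calc Nat.card ↥C₁ * Nat.card ↥C₂
        = Nat.card ↥(C₁ ⊔ C₂) * Nat.card ↥(C₁ ⊓ C₂) := h4.symm
      _ = Nat.card ↥(Submodule.span R (Set.range (H₂ * G₁.transpose))) * Nat.card ↥C₂
          * Nat.card ↥(C₁ ⊓ C₂) := by rw [hrb]
      _ = Nat.card ↥(C₁ ⊓ C₂) *
          Nat.card ↥(Submodule.span R (Set.range (H₂ * G₁.transpose))) * Nat.card ↥C₂ := by ring
  simp only [rankq]
  rw [key, Nat.cast_mul, Real.logb_mul (by positivity) (by positivity)]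
  ring
end

section
/- Let R be a finite chain ring with nilpotency index t and residue field F_q, and let C_1, C_2 be free λ-constacyclic codes of length n over R with Ψ(C_i) = ⟨F_i⟩ where F_i divides x^n − λ in R[x]. Then C_1 + C_2 = R^n if and only if lcm(F_1, F_2) = F_1 F_2 (up to units), i.e., F_1 and F_2 are coprime. Moreover C_1 ∩ C_2 = {0} with C_1 + C_2 = R^n (i.e., {C_1, C_2} is a linear complementary pair) if and only if additionally deg(F_1) + deg(F_2) = n. -/
open Polynomial

/-- The ambient ring `R[x]/(xⁿ - λ)` of λ-constacyclic codes of length `n`. -/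
def ConstaAmbient (R : Type*) [CommRing R] (n : ℕ) (lam : R) : Type _ :=
  Polynomial R ⧸ Ideal.span {(X : Polynomial R) ^ n - Polynomial.C lam}

noncomputable instance (R : Type*) [CommRing R] (n : ℕ) (lam : R) :
    CommRing (ConstaAmbient R n lam) := Ideal.Quotient.commRing _

/-- A monic polynomial dividing a nonzero polynomial has degree at most that of the latter. -/
lemma monic_dvd_natDegree_le {R : Type*} [CommRing R] [Nontrivial R] {p q : Polynomial R}
    (hp : p.Monic) (hq : q ≠ 0) (h : p ∣ q) : p.natDegree ≤ q.natDegree := by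
  obtain ⟨g, rfl⟩ := h
  have hg : g ≠ 0 := by rintro rfl; simp at hq
  have : (p * g).natDegree = p.natDegree + g.natDegree := by
    apply Polynomial.natDegree_mul'
    simpa [hp.leadingCoeff] using Polynomial.leadingCoeff_ne_zero.mpr hg
  omega

/-- Two monic polynomials of the same degree, one dividing the other, are equal. -/
lemma monic_dvd_eq {R : Type*} [CommRing R] [Nontrivial R] {p q : Polynomial R}
    (hp : p.Monic) (hq : q.Monic) (h : p ∣ q) (hdeg : p.natDegree = q.natDegree) : p = q := by
  obtain ⟨g, rfl⟩ := h
  have hg : g ≠ 0 := by rintro rfl; simpa using hq.ne_zero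
  have hmul : (p * g).natDegree = p.natDegree + g.natDegree := by
    apply Polynomial.natDegree_mul'
    simpa [hp.leadingCoeff] using Polynomial.leadingCoeff_ne_zero.mpr hg
  have hg0 : g.natDegree = 0 := by omega
  have hgC : g = Polynomial.C (g.coeff 0) := Polynomial.eq_C_of_natDegree_eq_zero hg0
  have hc : g.coeff 0 ≠ 0 := by
    intro h0; apply hg; rw [hgC, h0, map_zero]
  have hlead : (p * g).leadingCoeff = g.coeff 0 := by
    conv_lhs => rw [hgC]
    rw [Polynomial.leadingCoeff_mul' (by
      rw [hp.leadingCoeff, Polynomial.leadingCoeff_C, one_mul]; exact hc),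
      hp.leadingCoeff, Polynomial.leadingCoeff_C, one_mul]
  have : g.coeff 0 = 1 := by rw [← hlead, hq.leadingCoeff]
  rw [hgC, this, map_one, mul_one]

theorem free_constacyclic_sum_and_lcp
    (R : Type*) [CommRing R] [Fintype R] [IsLocalRing R]
    (γ : R) (t q n : ℕ)
    (hγ : IsLocalRing.maximalIdeal R = Ideal.span {γ})
    (ht : γ ^ t = 0) (ht' : γ ^ (t - 1) ≠ 0)
    (hq : q = Nat.card (IsLocalRing.ResidueField R))
    (lam : R) (hlam : IsUnit lam) (hn : 0 < n)
    (F₁ F₂ : Polynomial R) (hm₁ : F₁.Monic) (hm₂ : F₂.Monic)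
    (hd₁ : F₁ ∣ (X : Polynomial R) ^ n - Polynomial.C lam)
    (hd₂ : F₂ ∣ (X : Polynomial R) ^ n - Polynomial.C lam)
    (I₁ I₂ : Ideal (ConstaAmbient R n lam))
    (hI₁ : I₁ = Ideal.span {(Ideal.Quotient.mk _ F₁ : ConstaAmbient R n lam)})
    (hI₂ : I₂ = Ideal.span {(Ideal.Quotient.mk _ F₂ : ConstaAmbient R n lam)}) :
    (I₁ ⊔ I₂ = ⊤ ↔ IsCoprime F₁ F₂) ∧
    ((I₁ ⊓ I₂ = ⊥ ∧ I₁ ⊔ I₂ = ⊤) ↔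
      (IsCoprime F₁ F₂ ∧ F₁.natDegree + F₂.natDegree = n)) := by
  set M : Polynomial R := (X : Polynomial R) ^ n - Polynomial.C lam with hM
  have hMmonic : M.Monic := by
    have := Polynomial.monic_X_pow_sub_C lam hn.ne'
    simpa [hM] using this
  have hMdeg : M.natDegree = n := Polynomial.natDegree_X_pow_sub_C
  subst hI₁ hI₂
  -- key: sup = ⊤ ↔ coprime
  have key : Ideal.span {(Ideal.Quotient.mk _ F₁ : ConstaAmbient R n lam)} ⊔
      Ideal.span {(Ideal.Quotient.mk _ F₂ : ConstaAmbient R n lam)} = ⊤ ↔ IsCoprime F₁ F₂ := by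
    rw [← Ideal.isCoprime_iff_sup_eq, Ideal.isCoprime_span_singleton_iff]
    constructor
    · rintro ⟨a, b, hab⟩
      obtain ⟨a', rfl⟩ := Ideal.Quotient.mk_surjective a
      obtain ⟨b', rfl⟩ := Ideal.Quotient.mk_surjective b
      have hz : (Ideal.Quotient.mk (Ideal.span {M}) (a' * F₁ + b' * F₂ - 1)) = 0 := by
        rw [map_sub, map_add, map_mul, map_mul, map_one, sub_eq_zero]
        exact hab
      rw [Ideal.Quotient.eq_zero_iff_mem, Ideal.mem_span_singleton] at hz
      obtain ⟨c, hc⟩ := hz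
      obtain ⟨G, hG⟩ := hd₁
      refine ⟨a' - G * c, b', ?_⟩
      have hc' : a' * F₁ + b' * F₂ - 1 = F₁ * G * c := by rw [hc, ← hG]
      linear_combination hc'
    · rintro ⟨a, b, hab⟩
      exact ⟨Ideal.Quotient.mk _ a, Ideal.Quotient.mk _ b, by
        rw [← map_mul, ← map_mul, ← map_add, hab, map_one]⟩
  refine ⟨key, ?_⟩
  constructor
  · rintro ⟨hinf, hsup⟩
    have hcop : IsCoprime F₁ F₂ := key.mp hsup
    refine ⟨hcop, ?_⟩
    have hmul : F₁ * F₂ ∣ M := hcop.mul_dvd hd₁ hd₂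
    -- from inf = ⊥ and coprime: M ∣ F₁ * F₂
    have hinf' : Ideal.span {(Ideal.Quotient.mk _ F₁ : ConstaAmbient R n lam)} *
        Ideal.span {(Ideal.Quotient.mk _ F₂ : ConstaAmbient R n lam)} = ⊥ := by
      exact (Ideal.mul_eq_inf_of_coprime hsup).trans hinf
    rw [Ideal.span_singleton_mul_span_singleton, ← map_mul,
      Ideal.span_singleton_eq_bot, Ideal.Quotient.eq_zero_iff_mem,
      Ideal.mem_span_singleton] at hinf'
    have h12 : (F₁ * F₂).Monic := hm₁.mul hm₂
    have hle1 : (F₁ * F₂).natDegree ≤ M.natDegree :=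
      monic_dvd_natDegree_le h12 hMmonic.ne_zero hmul
    have hle2 : M.natDegree ≤ (F₁ * F₂).natDegree :=
      monic_dvd_natDegree_le hMmonic h12.ne_zero hinf'
    have := hm₁.natDegree_mul hm₂
    omega
  · rintro ⟨hcop, hdeg⟩
    have hsup := key.mpr hcop
    refine ⟨?_, hsup⟩
    have hmul : F₁ * F₂ ∣ M := hcop.mul_dvd hd₁ hd₂
    have h12 : (F₁ * F₂).Monic := hm₁.mul hm₂
    have heq : F₁ * F₂ = M := by
      apply monic_dvd_eq h12 hMmonic hmul
      rw [hm₁.natDegree_mul hm₂, hdeg, hMdeg]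
    refine (Ideal.mul_eq_inf_of_coprime hsup).symm.trans ?_
    rw [Ideal.span_singleton_mul_span_singleton,
      ← map_mul]
    refine Ideal.span_singleton_eq_bot.mpr ?_
    rw [Ideal.Quotient.eq_zero_iff_mem, heq]
    exact Ideal.mem_span_singleton_self M
end

section
/- Let R be a finite chain ring with residue map π : R → F_q, let λ_1, λ_2 be units of R with π(λ_1) ≠ π(λ_2), and let C_i be a free λ_i-constacyclic code of length n over R for i = 1,2, such that C_1 ∩ C_2 is both λ_1-constacyclic and λ_2-constacyclic. Then C_1 ∩ C_2 = R^n or C_1 ∩ C_2 = {0}. -/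
/-- The `λ`-constashift `(x₀,…,x_{n-1}) ↦ (λ x_{n-1}, x₀, …, x_{n-2})`. -/
def constashift {R : Type*} [CommRing R] {n : ℕ} (hn : 0 < n) (lam : R)
    (x : Fin n → R) : Fin n → R :=
  fun i => if (i : ℕ) = 0 then lam * x ⟨n - 1, Nat.sub_lt hn Nat.one_pos⟩
           else x ⟨(i : ℕ) - 1, lt_of_le_of_lt (Nat.sub_le _ 1) i.isLt⟩


open IsLocalRing

/-- A free submodule of `R^n` over a finite chain ring containing `c • eᵢ` for all `i`,
with `c ≠ 0`, is all of `R^n`. -/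
lemma key_free (R : Type*) [CommRing R] [Fintype R] [IsLocalRing R] [IsPrincipalIdealRing R]
    {n : ℕ} (C : Submodule R (Fin n → R)) (hf : Module.Free R C) (c : R) (hc : c ≠ 0)
    (h : ∀ i : Fin n, (Pi.single i c : Fin n → R) ∈ C) : C = ⊤ := by
  classical
  haveI : Nontrivial R := nontrivial_of_ne c 0 hc
  set m := maximalIdeal R with hm
  obtain ⟨π, hπ⟩ := (IsPrincipalIdealRing.principal m).principal
  have hmnil : IsNilpotent m := by
    have := IsArtinianRing.isNilpotent_jacobson_bot (R := R)
    rwa [IsLocalRing.jacobson_eq_maximalIdeal ⊥ bot_ne_top] at this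
  have hπm : π ∈ m := by rw [hπ]; exact Ideal.subset_span rfl
  have Hex : ∃ k, π ^ k = 0 := by
    obtain ⟨E, hE⟩ := hmnil
    exact ⟨E, by simpa [hE] using Ideal.pow_mem_pow hπm E⟩
  set e := Nat.find Hex with hedef
  have he : π ^ e = 0 := Nat.find_spec Hex
  have hmin : ∀ j < e, π ^ j ≠ 0 := fun j hj => Nat.find_min Hex hj
  have hepos : 0 < e := by
    rcases Nat.eq_zero_or_pos e with h0 | h
    · exfalso; rw [h0, pow_zero] at he; exact one_ne_zero he
    · exact h
  -- unit such that elements not in m are units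
  have hunit : ∀ a : R, a ∉ m → IsUnit a := by
    intro a ha; by_contra hu; exact ha (IsLocalRing.mem_maximalIdeal a |>.mpr hu)
  -- every nonzero element is unit * π^s with s < e
  have factP : ∀ x : R, x ≠ 0 → ∃ (u : R) (s : ℕ), IsUnit u ∧ s < e ∧ x = u * π ^ s := by
    intro x hx
    set P : ℕ → Prop := fun s => x ∈ Ideal.span {π ^ s} with hP
    have hP0 : P 0 := by simp [hP, Ideal.span_singleton_one]
    set s := Nat.findGreatest P e with hs
    have hPs : P s := Nat.findGreatest_spec (Nat.zero_le e) hP0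
    have hsle : s ≤ e := Nat.findGreatest_le e
    have hslt : s < e := by
      rcases lt_or_eq_of_le hsle with h | h
      · exact h
      · exfalso
        rw [h] at hPs
        rw [hP] at hPs
        simp only [he, Ideal.span_singleton_eq_bot.mpr rfl] at hPs
        exact hx (by simpa using hPs)
    obtain ⟨a, ha⟩ := Ideal.mem_span_singleton'.mp hPs
    refine ⟨a, s, ?_, hslt, ha.symm⟩
    by_contra hna
    have ham : a ∈ m := IsLocalRing.mem_maximalIdeal a |>.mpr hna
    rw [hπ] at ham
    obtain ⟨b, hb'⟩ := Submodule.mem_span_singleton.mp ham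
    have hb : a = π * b := by rw [← hb']; simp [smul_eq_mul, mul_comm]
    have : P (s + 1) := by
      show x ∈ Ideal.span {π ^ (s + 1)}
      rw [Ideal.mem_span_singleton]
      exact ⟨b, by rw [← ha, hb]; ring⟩
    exact Nat.findGreatest_is_greatest (Nat.lt_succ_self s) (by omega) this
  -- annihilator fact
  have factA : ∀ s : ℕ, s ≤ e → ∀ r : R, r * π ^ s = 0 → r ∈ Ideal.span {π ^ (e - s)} := by
    intro s hs r hr
    rcases eq_or_ne r 0 with rfl | hr0
    · exact Ideal.zero_mem _
    obtain ⟨u, t, hu, ht, rfl⟩ := factP r hr0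
    have h0 : π ^ (t + s) = 0 := by
      have h2 : u * π ^ (t + s) = 0 := by rw [pow_add, ← mul_assoc]; exact hr
      exact (IsUnit.mul_right_eq_zero hu).mp h2
    have hts : e ≤ t + s := by
      by_contra hlt
      exact hmin _ (by omega) h0
    rw [Ideal.mem_span_singleton]
    exact Dvd.dvd.mul_left ⟨π ^ (t - (e - s)), by rw [← pow_add]; congr 1; omega⟩ u
  -- get s with π^s • eᵢ ∈ C
  obtain ⟨u, s, hu, hslt, rfl⟩ := factP c hc
  have h' : ∀ i : Fin n, (Pi.single i (π ^ s) : Fin n → R) ∈ C := by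
    intro i
    have hmem : ((hu.unit⁻¹ : Rˣ) : R) • (Pi.single i (u * π ^ s) : Fin n → R) ∈ C :=
      C.smul_mem _ (h i)
    convert hmem using 1
    funext j
    simp only [Pi.smul_apply, smul_eq_mul]
    rcases eq_or_ne j i with rfl | hne
    · rw [Pi.single_eq_same, Pi.single_eq_same]
      exact (Units.inv_mul_cancel_left hu.unit (π ^ s)).symm
    · simp [Pi.single_eq_of_ne hne]
  -- basis argument
  haveI : Module.Finite R ↥C := Module.Finite.of_finite
  set ι := Module.Free.ChooseBasisIndex R ↥C with hι
  set b : Module.Basis ι R ↥C := Module.Free.chooseBasis R ↥C with hb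
  have key : ∀ i : Fin n, ∃ w : ↥C, ∀ j : Fin n,
      (Pi.single i (1:R) : Fin n → R) j - (w : Fin n → R) j ∈ m := by
    intro i
    set v : ↥C := ⟨Pi.single i (π ^ s), h' i⟩ with hv
    have hee : (e - s) + s = e := by omega
    have hv0 : (π ^ (e - s)) • v = 0 := by
      apply Subtype.ext
      show (π ^ (e - s)) • (Pi.single i (π ^ s) : Fin n → R) = 0
      funext j
      rcases eq_or_ne j i with rfl | hne
      · simp [Pi.single_eq_same, smul_eq_mul, ← pow_add, hee, he]
      · simp [Pi.single_eq_of_ne hne]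
    have hcoef : ∀ t : ι, π ^ (e - s) * (b.repr v t) = 0 := by
      intro t
      have := congrArg (fun z => b.repr z t) hv0
      simpa [map_smul, Finsupp.smul_apply, smul_eq_mul] using this
    have hg : ∀ t : ι, ∃ g : R, b.repr v t = π ^ s * g := by
      intro t
      have h3 := factA (e - s) (by omega) _ (by rw [mul_comm]; exact hcoef t)
      rw [Ideal.mem_span_singleton] at h3
      have hes : e - (e - s) = s := by omega
      rw [hes] at h3
      obtain ⟨g, hg⟩ := h3
      exact ⟨g, by rw [hg]⟩
    choose g hgspec using hg
    set w : ↥C := ∑ t, g t • b t with hw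
    have hvw : v = π ^ s • w := by
      rw [hw, Finset.smul_sum]
      have h4 : ∀ t : ι, π ^ s • (g t • b t) = (b.repr v t) • b t := by
        intro t; rw [smul_smul, ← hgspec]
      simp_rw [h4]
      exact (b.sum_repr v).symm
    refine ⟨w, fun j => ?_⟩
    have hj : ((Pi.single i (1:R) : Fin n → R) j - (w : Fin n → R) j) * π ^ s = 0 := by
      have h1 : (Pi.single i (π ^ s) : Fin n → R) j = π ^ s * ((w : Fin n → R) j) := by
        have h5 : (v : Fin n → R) j = ((π ^ s • w : ↥C) : Fin n → R) j := by rw [hvw]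
        simpa [smul_eq_mul] using h5
      have h2 : π ^ s * (Pi.single i (1:R) : Fin n → R) j
          = (Pi.single i (π ^ s) : Fin n → R) j := by
        rcases eq_or_ne j i with rfl | hne
        · simp
        · simp [Pi.single_eq_of_ne hne]
      have : (Pi.single i (1:R) : Fin n → R) j * π ^ s - (w : Fin n → R) j * π ^ s = 0 := by
        rw [mul_comm _ (π ^ s), mul_comm _ (π ^ s), h2, h1]; ring
      linear_combination this
    have h6 := factA s (le_of_lt hslt) _ hj
    have h7 : Ideal.span {π ^ (e - s)} ≤ m := by
      have h8 : m = Ideal.span {π} := hπ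
      rw [h8]
      apply Ideal.span_le.mpr
      intro z hz
      rw [Set.mem_singleton_iff] at hz
      subst hz
      exact Ideal.mem_span_singleton.mpr (dvd_pow_self π (by omega : e - s ≠ 0))
    exact h7 h6
  -- single i 1 in C ⊔ m • ⊤
  have hone : ∀ i : Fin n, (Pi.single i (1:R) : Fin n → R)
      ∈ C ⊔ m • (⊤ : Submodule R (Fin n → R)) := by
    intro i
    obtain ⟨w, hw⟩ := key i
    have hsplit : (Pi.single i (1:R) : Fin n → R)
        = (w : Fin n → R) + ((Pi.single i (1:R) : Fin n → R) - (w : Fin n → R)) := by ring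
    rw [hsplit]
    refine Submodule.add_mem _ (Submodule.mem_sup_left w.2) (Submodule.mem_sup_right ?_)
    set f : Fin n → R := (Pi.single i (1:R) : Fin n → R) - (w : Fin n → R) with hf
    rw [pi_eq_sum_univ f]
    apply Submodule.sum_mem
    intro j _
    exact Submodule.smul_mem_smul (hw j) Submodule.mem_top
  have htop : (⊤ : Submodule R (Fin n → R)) ≤ C ⊔ m • (⊤ : Submodule R (Fin n → R)) := by
    intro x _
    rw [pi_eq_sum_univ x]
    apply Submodule.sum_mem
    intro i _
    have heq : (fun j => if i = j then (1:R) else 0) = (Pi.single i (1:R) : Fin n → R) := by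
      funext j
      rw [Pi.single_apply]
      simp [eq_comm]
    rw [heq]
    exact Submodule.smul_mem _ _ (hone i)
  have step : ∀ k : ℕ, (⊤ : Submodule R (Fin n → R)) ≤ C ⊔ m ^ (k + 1) • ⊤ := by
    intro k
    induction k with
    | zero => simpa [pow_one] using htop
    | succ k ih =>
      have h1 : m ^ (k + 1) • (⊤ : Submodule R (Fin n → R)) ≤ C ⊔ m ^ (k + 2) • ⊤ := by
        calc m ^ (k+1) • (⊤ : Submodule R (Fin n → R))
            ≤ m ^ (k+1) • (C ⊔ m • ⊤) := smul_mono_right _ htop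
          _ = m ^ (k+1) • C ⊔ m ^ (k+1) • (m • ⊤) := Submodule.smul_sup _ _ _
          _ ≤ C ⊔ m ^ (k+2) • ⊤ := by
              apply sup_le_sup Submodule.smul_le_right
              rw [← Submodule.smul_assoc, smul_eq_mul, ← pow_succ]
      exact le_trans ih (sup_le le_sup_left (le_trans h1 (by rw [show k+1+1 = k+2 from rfl])))
  have hme : m ^ e = ⊥ := by
    have h8 : m = Ideal.span {π} := hπ
    rw [h8, Ideal.span_singleton_pow, he, Ideal.span_singleton_eq_bot.mpr rfl]
  have hfin := step (e - 1)
  rw [show e - 1 + 1 = e by omega, hme, Submodule.bot_smul, sup_bot_eq] at hfin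
  exact eq_top_iff.mpr hfin

theorem inter_of_constacyclic_different_units
    (R : Type*) [CommRing R] [Fintype R] [IsLocalRing R] [IsPrincipalIdealRing R]
    {n : ℕ} (hn : 0 < n)
    (lam₁ lam₂ : R) (hu₁ : IsUnit lam₁) (hu₂ : IsUnit lam₂)
    (hres : IsLocalRing.residue R lam₁ ≠ IsLocalRing.residue R lam₂)
    (C₁ C₂ : Submodule R (Fin n → R))
    (hfree₁ : Module.Free R C₁) (hfree₂ : Module.Free R C₂)
    (hc₁ : ∀ x ∈ C₁, constashift hn lam₁ x ∈ C₁)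
    (hc₂ : ∀ x ∈ C₂, constashift hn lam₂ x ∈ C₂)
    (hboth₁ : ∀ x ∈ C₁ ⊓ C₂, constashift hn lam₁ x ∈ C₁ ⊓ C₂)
    (hboth₂ : ∀ x ∈ C₁ ⊓ C₂, constashift hn lam₂ x ∈ C₁ ⊓ C₂) :
    C₁ ⊓ C₂ = ⊤ ∨ C₁ ⊓ C₂ = ⊥ := by
  classical
  by_cases hbot : C₁ ⊓ C₂ = ⊥
  · right; exact hbot
  left
  set D := C₁ ⊓ C₂ with hD
  have hdu : IsUnit (lam₁ - lam₂) := by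
    by_contra hnu
    have hmem : lam₁ - lam₂ ∈ IsLocalRing.maximalIdeal R :=
      (IsLocalRing.mem_maximalIdeal _).mpr hnu
    exact hres (Ideal.Quotient.eq.mpr hmem)
  have tr : ∀ y ∈ D,
      (Pi.single (⟨0, hn⟩ : Fin n) (y ⟨n - 1, Nat.sub_lt hn Nat.one_pos⟩) : Fin n → R) ∈ D := by
    intro y hy
    have hd : constashift hn lam₁ y - constashift hn lam₂ y ∈ D :=
      sub_mem (hboth₁ y hy) (hboth₂ y hy)
    have heq : ((hdu.unit⁻¹ : Rˣ) : R) • (constashift hn lam₁ y - constashift hn lam₂ y)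
        = Pi.single (⟨0, hn⟩ : Fin n) (y ⟨n - 1, Nat.sub_lt hn Nat.one_pos⟩) := by
      funext i
      simp only [Pi.smul_apply, Pi.sub_apply, smul_eq_mul, constashift, Pi.single_apply]
      by_cases h0 : (i : ℕ) = 0
      · rw [if_pos h0, if_pos h0, if_pos (Fin.ext h0 : i = ⟨0, hn⟩)]
        rw [show lam₁ * y ⟨n - 1, Nat.sub_lt hn Nat.one_pos⟩
              - lam₂ * y ⟨n - 1, Nat.sub_lt hn Nat.one_pos⟩
            = (lam₁ - lam₂) * y ⟨n - 1, Nat.sub_lt hn Nat.one_pos⟩ from by ring]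
        exact Units.inv_mul_cancel_left hdu.unit _
      · rw [if_neg h0, if_neg h0, if_neg (fun hh => h0 (by rw [hh]))]
        simp
    rw [← heq]
    exact D.smul_mem _ hd
  have tr2 : ∀ d : ℕ, ∀ y, y ∈ D → ∀ j : ℕ, ∀ hj : j < n, j + d = n - 1 →
      (Pi.single (⟨0, hn⟩ : Fin n) (y ⟨j, hj⟩) : Fin n → R) ∈ D := by
    intro d
    induction d with
    | zero =>
      intro y hy j hj hsum
      have hje : (⟨j, hj⟩ : Fin n) = ⟨n - 1, Nat.sub_lt hn Nat.one_pos⟩ := Fin.ext (show j = n - 1 by omega)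
      rw [hje]
      exact tr y hy
    | succ d ih =>
      intro y hy j hj hsum
      have hj1 : j + 1 < n := by omega
      have happ := ih _ (hboth₁ y hy) (j + 1) hj1 (by omega)
      have hsh : constashift hn lam₁ y ⟨j + 1, hj1⟩ = y ⟨j, hj⟩ := by
        simp only [constashift]
        rw [if_neg (by simp)]
        congr 1
      rw [hsh] at happ
      exact happ
  have tr3 : ∀ c : R, (Pi.single (⟨0, hn⟩ : Fin n) c : Fin n → R) ∈ D →
      ∀ i : ℕ, ∀ hi : i < n, (Pi.single (⟨i, hi⟩ : Fin n) c : Fin n → R) ∈ D := by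
    intro c hc i
    induction i with
    | zero => intro hi; exact hc
    | succ i ih =>
      intro hi
      have hi' : i < n := by omega
      have hmem := hboth₁ _ (ih hi')
      have heq : constashift hn lam₁ (Pi.single (⟨i, hi'⟩ : Fin n) c : Fin n → R)
          = Pi.single (⟨i + 1, hi⟩ : Fin n) c := by
        funext k
        simp only [constashift, Pi.single_apply]
        by_cases h0 : (k : ℕ) = 0
        · rw [if_pos h0, if_neg (by simp [Fin.ext_iff]; omega),
            if_neg (by simp [Fin.ext_iff]; omega), mul_zero]
        · rw [if_neg h0]
          by_cases hk : (k : ℕ) = i + 1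
          · rw [if_pos (by simp [Fin.ext_iff]; omega), if_pos (Fin.ext hk)]
          · rw [if_neg (by simp [Fin.ext_iff]; omega), if_neg (by simp [Fin.ext_iff]; omega)]
      rw [heq] at hmem
      exact hmem
  obtain ⟨x, hx, hxne⟩ := Submodule.exists_mem_ne_zero_of_ne_bot hbot
  have hj : ∃ j : Fin n, x j ≠ 0 := by
    by_contra h
    push_neg at h
    exact hxne (funext h)
  obtain ⟨j, hxj⟩ := hj
  have h0 : (Pi.single (⟨0, hn⟩ : Fin n) (x j) : Fin n → R) ∈ D := by
    have := tr2 (n - 1 - j.1) x hx j.1 j.2 (by omega)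
    simpa using this
  have hall : ∀ i : Fin n, (Pi.single i (x j) : Fin n → R) ∈ D := by
    intro i
    have := tr3 _ h0 i.1 i.2
    simpa using this
  have h1 : C₁ = ⊤ :=
    key_free R C₁ hfree₁ (x j) hxj (fun i => (Submodule.mem_inf.mp (hall i)).1)
  have h2 : C₂ = ⊤ :=
    key_free R C₂ hfree₂ (x j) hxj (fun i => (Submodule.mem_inf.mp (hall i)).2)
  rw [hD, h1, h2, inf_idem]
end
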